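/- Let λ, μ be real numbers with λ ≥ 1 and μ > 1, and let n be a natural number. Then for every z in the open unit disc 𝕌 the function 𝔸[𝒲_{λ,μ}](z) is nonzero for z ≠ 0 and Re((𝔸[𝒲_{λ,μ}])_n(z)/𝔸[𝒲_{λ,μ}](z)) ≥ (2μ−1)/(2μ), where at z = 0 the ratio is understood as its analytic extension with value 1. -/

import Mathlib

/-- The Alexander transform of the normalized Wright function:
`𝔸[𝒲_{λ,μ}](z) = z + ∑_{m=1}^∞ (Γ(μ)/((m+1)! Γ(λm+μ))) z^{m+1}`. -/
noncomputable def alexNormWright (lam mu : ℝ) (z : ℂ) : ℂ :=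
  ∑' m : ℕ,
    ((Real.Gamma mu / (Nat.factorial (m + 1) * Real.Gamma (lam * m + mu)) : ℝ) : ℂ) * z ^ (m + 1)

/-- The `n`-th partial sum
`(𝔸[𝒲_{λ,μ}])_n(z) = z + ∑_{m=1}^n (Γ(μ)/((m+1)! Γ(λm+μ))) z^{m+1}`. -/
noncomputable def alexNormWrightPartial (lam mu : ℝ) (n : ℕ) (z : ℂ) : ℂ :=
  ∑ m ∈ Finset.range (n + 1),
    ((Real.Gamma mu / (Nat.factorial (m + 1) * Real.Gamma (lam * m + mu)) : ℝ) : ℂ) * z ^ (m + 1)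

namespace WrightAux

/-- The coefficient sequence. -/
noncomputable def wc (lam mu : ℝ) (m : ℕ) : ℝ :=
  Real.Gamma mu / (Nat.factorial (m + 1) * Real.Gamma (lam * m + mu))

variable {lam mu : ℝ}

lemma arg_pos (hlam : 1 ≤ lam) (hmu : 1 < mu) (m : ℕ) : 0 < lam * m + mu := by
  have h1 : (0:ℝ) ≤ lam * m := mul_nonneg (by linarith) (Nat.cast_nonneg m)
  linarith

lemma wc_pos (hlam : 1 ≤ lam) (hmu : 1 < mu) (m : ℕ) : 0 < wc lam mu m := by
  have h1 := Real.Gamma_pos_of_pos (show (0:ℝ) < mu by linarith)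
  have h2 := Real.Gamma_pos_of_pos (arg_pos hlam hmu m)
  have h3 : (0:ℝ) < (Nat.factorial (m+1) : ℝ) := by
    exact_mod_cast Nat.factorial_pos (m+1)
  exact div_pos h1 (by positivity)

lemma wc_zero (hmu : 1 < mu) : wc lam mu 0 = 1 := by
  have h := Real.Gamma_pos_of_pos (show (0:ℝ) < mu by linarith)
  have h1 : ((Nat.factorial (0+1) : ℕ) : ℝ) = 1 := by norm_num [Nat.factorial]
  simp only [wc, Nat.cast_zero, mul_zero, zero_add, h1, one_mul]
  exact div_self h.ne' 

lemma gamma_poch (hmu : 1 < mu) : ∀ m : ℕ, mu ^ m * Real.Gamma mu ≤ Real.Gamma (mu + m) := by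
  intro m
  induction m with
  | zero => simp
  | succ k ih =>
    have hpos : (0:ℝ) < mu + k := by positivity
    have h1 : Real.Gamma (mu + (k+1 : ℕ)) = (mu + k) * Real.Gamma (mu + k) := by
      rw [show (mu + ((k+1 : ℕ) : ℝ)) = (mu + k) + 1 by push_cast; ring]
      exact Real.Gamma_add_one hpos.ne'
    have h2 : mu * (mu ^ k * Real.Gamma mu) ≤ (mu + k) * Real.Gamma (mu + k) := by
      have hΓ := Real.Gamma_pos_of_pos hpos
      have hmu0 : (0:ℝ) < mu := by linarith
      have : mu * (mu ^ k * Real.Gamma mu) ≤ mu * Real.Gamma (mu + k) :=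
        mul_le_mul_of_nonneg_left ih hmu0.le
      have h3 : mu * Real.Gamma (mu + k) ≤ (mu + k) * Real.Gamma (mu + k) :=
        mul_le_mul_of_nonneg_right (le_add_of_nonneg_right (Nat.cast_nonneg k)) hΓ.le
      linarith
    rw [h1, pow_succ]
    nlinarith [Real.Gamma_pos_of_pos (show (0:ℝ) < mu by linarith), pow_pos (show (0:ℝ) < mu by linarith) k]

lemma gamma_main (hlam : 1 ≤ lam) (hmu : 1 < mu) (m : ℕ) (hm : 1 ≤ m) :
    mu ^ m * Real.Gamma mu ≤ Real.Gamma (lam * m + mu) := by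
  have h1 := gamma_poch hmu m
  have hm1 : (1:ℝ) ≤ (m:ℝ) := by exact_mod_cast hm
  have hA : (mu + m) ∈ Set.Ici (2:ℝ) := by simp only [Set.mem_Ici]; linarith
  have hle : mu + m ≤ lam * m + mu := by nlinarith
  have hB : (lam * m + mu) ∈ Set.Ici (2:ℝ) := by simp only [Set.mem_Ici]; linarith
  have h2 : Real.Gamma (mu + m) ≤ Real.Gamma (lam * m + mu) :=
    Real.Gamma_strictMonoOn_Ici.monotoneOn hA hB hle
  linarith

lemma re_le_half {w : ℂ} (h : ‖w‖ ≤ ‖1 - w‖) : w.re ≤ 1/2 := by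
  have h1 : ‖w‖^2 ≤ ‖1 - w‖^2 := pow_le_pow_left₀ (norm_nonneg w) h 2
  rw [Complex.sq_norm, Complex.sq_norm] at h1
  rw [Complex.normSq_apply, Complex.normSq_apply] at h1
  simp only [Complex.sub_re, Complex.sub_im, Complex.one_re, Complex.one_im] at h1
  nlinarith

lemma final_bound {mu x : ℝ} (hmu : 1 < mu) (h : mu * x ≤ 1/2) :
    (2*mu - 1) / (2*mu) ≤ 1 - x := by
  rw [div_le_iff₀ (by linarith)]
  nlinarith

lemma fact_ge (k : ℕ) : 2 * 3 ^ k ≤ Nat.factorial (k + 2) := by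
  induction k with
  | zero => norm_num [Nat.factorial]
  | succ k ih =>
    have h : Nat.factorial (k + 3) = (k + 3) * Nat.factorial (k + 2) := rfl
    calc 2 * 3 ^ (k+1) = 3 * (2 * 3 ^ k) := by ring
    _ ≤ 3 * Nat.factorial (k + 2) := Nat.mul_le_mul_left 3 ih
    _ ≤ (k + 3) * Nat.factorial (k + 2) := Nat.mul_le_mul_right _ (by omega)
    _ = Nat.factorial (k + 3) := h.symm

lemma wc_succ_le (hlam : 1 ≤ lam) (hmu : 1 < mu) (k : ℕ) :
    wc lam mu (k + 1) ≤ (2 * mu)⁻¹ * ((3 * mu)⁻¹) ^ k := by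
  have hmu0 : (0:ℝ) < mu := by linarith
  have hΓ := Real.Gamma_pos_of_pos hmu0
  have hg := gamma_main hlam hmu (k+1) (by omega)
  have hfac : (2 * 3 ^ k : ℝ) ≤ (Nat.factorial (k + 2) : ℝ) := by
    exact_mod_cast fact_ge k
  have hD0 : (0:ℝ) < 2 * 3 ^ k * (mu ^ (k+1) * Real.Gamma mu) := by positivity
  have hDle : 2 * 3 ^ k * (mu ^ (k+1) * Real.Gamma mu) ≤
      ((Nat.factorial (k + 1 + 1) : ℕ) : ℝ) * Real.Gamma (lam * ((k+1 : ℕ) : ℝ) + mu) := by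
    have h1 : (0:ℝ) ≤ mu ^ (k+1) * Real.Gamma mu := by positivity
    exact mul_le_mul hfac hg h1 (by positivity)
  have step : wc lam mu (k+1) ≤ Real.Gamma mu / (2 * 3 ^ k * (mu ^ (k+1) * Real.Gamma mu)) := by
    unfold wc
    exact div_le_div_of_nonneg_left hΓ.le hD0 hDle
  refine step.trans (le_of_eq ?_)
  rw [div_eq_iff (by positivity)]
  field_simp
  rw [div_pow, one_pow, mul_pow, pow_succ]
  field_simp

end WrightAux


/-- If `λ ≥ 1` and `μ > 1`, then on the open unit disc `𝔸[𝒲_{λ,μ}]` is nonzero away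
from `0`, and `Re((𝔸[𝒲_{λ,μ}])_n(z)/𝔸[𝒲_{λ,μ}](z)) ≥ (2μ-1)/(2μ)`, the ratio being
understood as its analytic extension, with value `1`, at `z = 0`. -/
theorem re_partial_div_alexNormWright (lam mu : ℝ) (hlam : 1 ≤ lam) (hmu : 1 < mu) (n : ℕ) :
    ∀ z : ℂ, ‖z‖ < 1 →
      (z ≠ 0 → alexNormWright lam mu z ≠ 0) ∧
      (2 * mu - 1) / (2 * mu) ≤
        (if z = 0 then (1 : ℂ)
          else alexNormWrightPartial lam mu n z / alexNormWright lam mu z).re := by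
  intro z hz
  have hmu0 : (0:ℝ) < mu := by linarith
  set r : ℝ := ‖z‖ with hrdef
  have hr0 : 0 ≤ r := norm_nonneg z
  set c : ℕ → ℝ := WrightAux.wc lam mu with hcdef
  have hcpos : ∀ m, 0 < c m := WrightAux.wc_pos hlam hmu
  have hc0 : c 0 = 1 := WrightAux.wc_zero hmu
  have hcle : ∀ k, c (k+1) ≤ (2*mu)⁻¹ * ((3*mu)⁻¹)^k := WrightAux.wc_succ_le hlam hmu
  set q : ℝ := (3*mu)⁻¹ with hqdef
  have hq0 : 0 < q := by rw [hqdef]; positivity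
  have hq1 : q < 1 := inv_lt_one_of_one_lt₀ (by linarith)
  have hcle1 : ∀ m, c m ≤ 1 := by
    intro m
    cases m with
    | zero => rw [hc0]
    | succ k =>
      refine (hcle k).trans ?_
      have h1 : ((3*mu)⁻¹:ℝ)^k ≤ 1 := pow_le_one₀ (by positivity) hq1.le
      have h2 : (2*mu)⁻¹ ≤ (1:ℝ) := by
        rw [inv_le_one_iff₀]; right; linarith
      nlinarith [inv_pos.mpr (show (0:ℝ) < 2*mu by linarith)]
  -- complex series
  set tC : ℕ → ℂ := fun m => ((c m : ℝ) : ℂ) * z ^ (m+1) with htCdef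
  have hnormtC : ∀ m, ‖tC m‖ = c m * r ^ (m+1) := by
    intro m
    rw [htCdef]
    simp only [norm_mul, Complex.norm_real, norm_pow]
    rw [Real.norm_eq_abs, abs_of_pos (hcpos m)]
  have hsummC : Summable tC := by
    apply Summable.of_norm_bounded (g := fun m => r ^ (m+1))
    · simpa [pow_succ] using (summable_geometric_of_lt_one hr0 hz).mul_right r
    · intro m
      rw [hnormtC m]
      exact mul_le_of_le_one_left (by positivity) (hcle1 m)
  -- real series g k = c (k+1) * r^(k+2)
  set g : ℕ → ℝ := fun k => c (k+1) * r ^ (k+2) with hgdef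
  have hg0 : ∀ k, 0 ≤ g k := by
    intro k
    simp only [hgdef]
    exact mul_nonneg (hcpos _).le (pow_nonneg hr0 _)
  have hgle : ∀ k, g k ≤ ((2*mu)⁻¹ * r) * q ^ k := by
    intro k
    have h1 : r ^ (k+2) ≤ r := by
      calc r ^ (k+2) = r * r^(k+1) := by ring
      _ ≤ r * 1 := by
        exact mul_le_mul_of_nonneg_left (pow_le_one₀ hr0 hz.le) hr0
      _ = r := by ring
    calc g k = c (k+1) * r^(k+2) := by rw [hgdef]
    _ ≤ ((2*mu)⁻¹ * q^k) * r := by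
        apply mul_le_mul ((hcle k).trans_eq (by rw [hqdef])) h1 (pow_nonneg hr0 _)
        have : (0:ℝ) ≤ (2*mu)⁻¹ := by positivity
        exact mul_nonneg this (pow_nonneg hq0.le _)
    _ = ((2*mu)⁻¹ * r) * q^k := by ring
  have hsumq : Summable (fun k : ℕ => ((2*mu)⁻¹ * r) * q ^ k) :=
    (summable_geometric_of_lt_one hq0.le hq1).mul_left _
  have hsumg : Summable g := Summable.of_nonneg_of_le hg0 hgle hsumq
  set Sr : ℝ := ∑' k, g k with hSdef
  have hS0 : 0 ≤ Sr := tsum_nonneg hg0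
  have hSle : 2 * (3*mu - 1) * Sr ≤ 3 * r := by
    have h1 : Sr ≤ ∑' k, ((2*mu)⁻¹ * r) * q ^ k := Summable.tsum_le_tsum hgle hsumg hsumq
    have h2 : ∑' k, ((2*mu)⁻¹ * r) * q ^ k = ((2*mu)⁻¹ * r) * (1 - q)⁻¹ := by
      rw [tsum_mul_left, tsum_geometric_of_lt_one hq0.le hq1]
    have h3 : 2 * (3*mu-1) * (((2*mu)⁻¹ * r) * (1 - q)⁻¹) = 3 * r := by
      simp only [hqdef]
      have hne : (3*mu:ℝ) ≠ 0 := by positivity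
      have h1q : (1 - (3*mu)⁻¹ : ℝ) = (3*mu - 1)/(3*mu) := by field_simp
      rw [h1q]
      have h31 : (3*mu - 1 : ℝ) ≠ 0 := by nlinarith
      field_simp
    nlinarith [h1, h2, h3, mul_pos (show (0:ℝ) < 2 by norm_num) (show (0:ℝ) < 3*mu-1 by nlinarith)]
  -- splits
  have hsplitC : ∑ i ∈ Finset.range (n+1), tC i + ∑' k, tC (k + (n+1)) = ∑' i, tC i :=
    Summable.sum_add_tsum_nat_add (n+1) hsummC
  set T : ℂ := ∑' k, tC (k + (n+1)) with hTdef
  set f : ℂ := ∑' i, tC i with hfdef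
  have hf_eq : alexNormWright lam mu z = f := rfl
  have hfn_eq : alexNormWrightPartial lam mu n z = ∑ i ∈ Finset.range (n+1), tC i := rfl
  set fn : ℂ := ∑ i ∈ Finset.range (n+1), tC i with hfndef
  -- tail bound ‖T‖ ≤ Tb
  have hsumgn : Summable fun k => g (k + n) := (summable_nat_add_iff n).2 hsumg
  set Tb : ℝ := ∑' k, g (k + n) with hTbdef
  have hTb0 : 0 ≤ Tb := tsum_nonneg (fun k => hg0 _)
  have hTbS : Tb ≤ Sr := by
    have := Summable.sum_add_tsum_nat_add n hsumg
    have hpart : 0 ≤ ∑ i ∈ Finset.range n, g i := Finset.sum_nonneg fun i _ => hg0 i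
    linarith [this]
  have hTnorm : ‖T‖ ≤ Tb := by
    rw [hTdef, hTbdef]
    have heq : ∀ k : ℕ, ‖tC (k + (n+1))‖ = g (k + n) := by
      intro k
      rw [hnormtC]
      simp only [hgdef]
      rfl
    calc ‖∑' k, tC (k + (n+1))‖ ≤ ∑' k, ‖tC (k + (n+1))‖ := by
          apply norm_tsum_le_tsum_norm
          simpa [heq] using hsumgn
    _ = ∑' k, g (k + n) := tsum_congr heq
  -- ‖f - z‖ ≤ Sr
  have hsplit1 : ∑ i ∈ Finset.range 1, tC i + ∑' k, tC (k + 1) = f :=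
    Summable.sum_add_tsum_nat_add 1 hsummC
  have hfirst : ∑ i ∈ Finset.range 1, tC i = z := by
    rw [Finset.sum_range_one, htCdef]
    simp [hc0]
  have hE : ‖f - z‖ ≤ Sr := by
    have hfz : f - z = ∑' k, tC (k + 1) := by
      rw [← hsplit1, hfirst]; ring
    rw [hfz]
    have heq : ∀ k : ℕ, ‖tC (k + 1)‖ = g k := fun k => by rw [hnormtC]
    calc ‖∑' k, tC (k+1)‖ ≤ ∑' k, ‖tC (k+1)‖ := by
          apply norm_tsum_le_tsum_norm
          simpa [heq] using hsumg
    _ = ∑' k, g k := tsum_congr heq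
    _ = Sr := rfl
  -- ‖fn - z‖ ≤ Sr - Tb  (= partial sum of g)
  have hPb : ‖fn - z‖ ≤ Sr - Tb := by
    have hsum' : fn = ∑ i ∈ Finset.range n, tC (i+1) + tC 0 := by
      rw [hfndef, Finset.sum_range_succ']
    have htC0 : tC 0 = z := by rw [htCdef]; simp [hc0]
    have h1 : fn - z = ∑ i ∈ Finset.range n, tC (i+1) := by
      rw [hsum', htC0]; ring
    have h2 : ‖fn - z‖ ≤ ∑ i ∈ Finset.range n, g i := by
      rw [h1]
      calc ‖∑ i ∈ Finset.range n, tC (i+1)‖ ≤ ∑ i ∈ Finset.range n, ‖tC (i+1)‖ :=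
            norm_sum_le _ _
      _ = ∑ i ∈ Finset.range n, g i := by
            apply Finset.sum_congr rfl
            intro i _
            rw [hnormtC]
    have h3 : ∑ i ∈ Finset.range n, g i + Tb = Sr := Summable.sum_add_tsum_nat_add n hsumg
    linarith
  -- f = fn + T
  have hfT : f = fn + T := hsplitC.symm
  -- main case split
  by_cases hz0 : z = 0
  · subst hz0
    refine ⟨fun h => absurd rfl h, ?_⟩
    rw [if_pos rfl]
    simp only [Complex.one_re]
    rw [div_le_one (by linarith)]
    linarith
  · have hrpos : 0 < r := by rwa [hrdef, norm_pos_iff]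
    have hflb : r - Sr ≤ ‖f‖ := by
      have h1 : ‖z‖ - ‖f‖ ≤ ‖z - f‖ := norm_sub_norm_le z f
      have h2 : ‖z - f‖ = ‖f - z‖ := norm_sub_rev z f
      linarith
    have hSltr : Sr < r := by nlinarith
    have hfne : f ≠ 0 := by
      have : 0 < ‖f‖ := by linarith
      exact norm_pos_iff.mp this
    refine ⟨fun _ => by rwa [hf_eq], ?_⟩
    rw [if_neg hz0]
    -- key norm inequality
    have hmuT : ‖(mu:ℂ) * T‖ = mu * ‖T‖ := by
      rw [norm_mul, Complex.norm_real, Real.norm_eq_abs, abs_of_pos hmu0]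
    have h1muT : ‖(1 - (mu:ℂ)) * T‖ = (mu - 1) * ‖T‖ := by
      rw [norm_mul]
      congr 1
      rw [show (1 - (mu:ℂ)) = ((1 - mu : ℝ) : ℂ) by push_cast; ring]
      rw [Complex.norm_real, Real.norm_eq_abs, abs_of_nonpos (by linarith)]
      ring
    have hrw : f - (mu:ℂ) * T = z + (fn - z) + (1 - (mu:ℂ)) * T := by
      rw [hfT]; ring
    have hlow : r - (Sr - Tb) - (mu - 1) * ‖T‖ ≤ ‖f - (mu:ℂ) * T‖ := by
      rw [hrw]
      set a : ℂ := z + (fn - z) + (1 - (mu:ℂ)) * T with hadef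
      have hz_eq : z = a - (fn - z) - (1 - (mu:ℂ)) * T := by rw [hadef]; ring
      have : ‖z‖ ≤ ‖a‖ + ‖fn - z‖ + ‖(1 - (mu:ℂ)) * T‖ := by
        calc ‖z‖ = ‖a - (fn - z) - (1 - (mu:ℂ)) * T‖ := by rw [← hz_eq]
        _ ≤ ‖a - (fn - z)‖ + ‖(1 - (mu:ℂ)) * T‖ := norm_sub_le _ _
        _ ≤ ‖a‖ + ‖fn - z‖ + ‖(1 - (mu:ℂ)) * T‖ := by
            have := norm_sub_le a (fn - z)
            linarith
      rw [h1muT] at this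
      linarith
    have hkey : ‖(mu:ℂ) * T‖ ≤ ‖f - (mu:ℂ) * T‖ := by
      rw [hmuT]
      have hTle : ‖T‖ ≤ Tb := hTnorm
      have hgoal : mu * Tb ≤ r - (Sr - Tb) - (mu - 1) * Tb := by
        nlinarith
      have h5 : mu * ‖T‖ ≤ mu * Tb := mul_le_mul_of_nonneg_left hTle hmu0.le
      have h6 : (mu - 1) * ‖T‖ ≤ (mu - 1) * Tb :=
        mul_le_mul_of_nonneg_left hTle (by linarith)
      linarith
    -- to Re bound
    set w : ℂ := (mu:ℂ) * T / f with hwdef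
    have hwle : ‖w‖ ≤ ‖1 - w‖ := by
      have h1 : (1:ℂ) - w = (f - (mu:ℂ) * T) / f := by
        rw [hwdef]; field_simp
      rw [h1, hwdef, norm_div, norm_div]
      exact div_le_div_of_nonneg_right hkey (norm_nonneg f)
    have hwre : w.re ≤ 1/2 := WrightAux.re_le_half hwle
    have hTf_re : mu * (T / f).re ≤ 1/2 := by
      have : w.re = mu * (T / f).re := by
        rw [hwdef, mul_div_assoc]
        exact Complex.re_ofReal_mul mu (T / f)
      linarith [hwre, this.symm.le]
    -- final
    have hratio : alexNormWrightPartial lam mu n z / alexNormWright lam mu z = 1 - T / f := by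
      rw [hf_eq, hfn_eq]
      have : fn = f - T := by rw [hfT]; ring
      rw [this, sub_div, div_self hfne]
    rw [hratio]
    simp only [Complex.sub_re, Complex.one_re]
    exact WrightAux.final_bound hmu hTf_re
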